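/- Let β and y be real numbers with β ≥ 1 and y ≥ 0. Suppose that y ≥ 4 − 3·√β, and that equality y = 4 − 3·√β can hold only if β = 1. Then 2·y² + β > 32/19. -/
import Mathlib

/-- Algebraic core of Theorem I: if `β ≥ 1`, `y ≥ 0`, `y ≥ 4 - 3√β`, and equality
`y = 4 - 3√β` can hold only if `β = 1`, then `2y² + β > 32/19`. -/
theorem stmt0 (β y : ℝ) (hβ : 1 ≤ β) (hy : 0 ≤ y)
    (hineq : y ≥ 4 - 3 * Real.sqrt β)
    (heq : y = 4 - 3 * Real.sqrt β → β = 1) :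
    2 * y ^ 2 + β > 32 / 19 := by
  set s := Real.sqrt β with hs
  have hs1 : 1 ≤ s := by
    rw [hs, show (1:ℝ) = Real.sqrt 1 by simp]
    exact Real.sqrt_le_sqrt hβ
  have hsq : s ^ 2 = β := by
    rw [hs, sq, Real.mul_self_sqrt (by linarith)]
  rcases eq_or_lt_of_le hβ with h1 | h1
  · have : s = 1 := by rw [hs, ← h1]; simp
    rw [this] at hineq
    nlinarith
  · have hstrict : y > 4 - 3 * s := by
      rcases lt_or_eq_of_le hineq with h | h
      · exact h
      · exact absurd (heq h.symm) (by linarith)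
    nlinarith [sq_nonneg (19 * s - 24), sq_nonneg y, mul_nonneg hy (le_of_lt (sub_pos.mpr hstrict)), sq_nonneg (y - (4 - 3 * s))]
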